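/- Suppose μ, ν, μ*, ν* and δ* are nonzero complex numbers with |μ| = |ν| = 1, μ*ν* = δ*, |δ*| = 1, |μ*/ν*| ≠ 1, and δ* is not a root of unity. If for all integers k, l the equality μ^k ν^l = 1 implies μ*^k ν*^l = 1, then μ^k ν^l = 1 only for (k,l) = (0,0); that is, (μ,ν) are multiplicatively independent. -/

import Mathlib

theorem stmt_1 (μ ν μs νs δs : ℂ)
    (hμ : ‖μ‖ = 1) (hν : ‖ν‖ = 1)
    (hprod : μs * νs = δs) (hδ : ‖δs‖ = 1)
    (hratio : ‖μs / νs‖ ≠ 1)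
    (hroot : ∀ n : ℕ, 0 < n → δs ^ n ≠ 1)
    (hgal : ∀ k l : ℤ, μ ^ k * ν ^ l = 1 → μs ^ k * νs ^ l = 1) :
    ∀ k l : ℤ, μ ^ k * ν ^ l = 1 → k = 0 ∧ l = 0 := by
  intro k l hkl
  have hδ0 : δs ≠ 0 := by
    intro h; rw [h] at hδ; simp at hδ
  have hμs0 : μs ≠ 0 := fun h => hδ0 (by rw [← hprod, h, zero_mul])
  have hνs0 : νs ≠ 0 := fun h => hδ0 (by rw [← hprod, h, mul_zero])
  have h1 : μs ^ k * νs ^ l = 1 := hgal k l hkl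
  set a : ℝ := ‖μs‖ with ha
  set b : ℝ := ‖νs‖ with hb
  have ha0 : 0 < a := norm_pos_iff.mpr hμs0
  have hb0 : 0 < b := norm_pos_iff.mpr hνs0
  have hab : a * b = 1 := by
    rw [ha, hb, ← norm_mul, hprod, hδ]
  have habs : a ^ k * b ^ l = 1 := by
    have := congrArg (fun z : ℂ => ‖z‖) h1
    simpa [norm_mul, norm_zpow] using this
  -- b = a⁻¹
  have hbinv : b = a⁻¹ := by field_simp at hab ⊢; linarith
  have hane : a ≠ 1 := by
    intro h
    apply hratio
    rw [norm_div, ← ha, ← hb, hbinv, h]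
    norm_num
  -- a^(k-l) = 1
  have hkl2 : a ^ (k - l) = 1 := by
    rw [hbinv] at habs
    rw [zpow_sub₀ (ne_of_gt ha0)]
    rw [inv_zpow] at habs
    rw [div_eq_one_iff_eq (zpow_ne_zero _ (ne_of_gt ha0))]
    field_simp at habs ⊢
    linarith [habs]
  have hkeql : k = l := by
    by_contra hne
    have hlog := congrArg Real.log hkl2
    rw [Real.log_zpow, Real.log_one] at hlog
    have hla : Real.log a ≠ 0 := Real.log_ne_zero_of_pos_of_ne_one ha0 hane
    have : (k - l : ℝ) = 0 := by
      rcases mul_eq_zero.mp hlog with h | h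
      · exact_mod_cast h
      · exact absurd h hla
    have : k - l = 0 := by exact_mod_cast this
    exact hne (by omega)
  subst hkeql
  -- δs^k = 1
  have hδk : δs ^ k = 1 := by
    rw [← hprod, mul_zpow]; exact h1
  have hk0 : k = 0 := by
    by_contra hk
    have hpos : 0 < k.natAbs := Int.natAbs_pos.mpr hk
    apply hroot k.natAbs hpos
    rcases Int.natAbs_eq k with h | h
    · rw [← zpow_natCast, ← h, hδk]
    · rw [← zpow_natCast]
      have : (k.natAbs : ℤ) = -k := by omega
      rw [this, zpow_neg, hδk, inv_one]
  exact ⟨hk0, hk0⟩
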